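/- Symmetric strong Ekeland principle (IV). In the abstract symmetrization framework, let X be a Banach space and f : X → ℝ ∪ {+∞} a proper, bounded below, lower semicontinuous functional such that f(u^H) ≤ f(u) for all u ∈ S and all H ∈ ℋ*. Then for every ρ₁ > 0, ρ₂ > 0, σ > 0 and every u ∈ S with f(u) < inf_X f + σρ₁, there exists v ∈ X such that: (a) ‖v − v*‖_V < (K(C_Θ+1)+1)(ρ₁+ρ₂); (b) f(w) ≥ f(v) − σ‖w − v‖ for all w ∈ X; (c) for every sequence (u_h) ⊂ X, if lim_h (f(u_h) + σ‖u_h − v‖) = f(v) then u_h → v in X. -/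

import Mathlib

open Filter Topology Metric Set

/-- Weak form of Ekeland's variational principle for `EReal`-valued functions. -/
lemma ekeland_weak' {X : Type*} [NormedAddCommGroup X] [CompleteSpace X]
    (f : X → EReal) (c : ℝ) (hc : ∀ u, (c : EReal) ≤ f u)
    (hf : LowerSemicontinuous f) (lam : ℝ) (hlam : 0 < lam)
    (x₀ : X) (h₀ : f x₀ < ⊤) :
    ∃ v : X, f v + ((lam * ‖v - x₀‖ : ℝ) : EReal) ≤ f x₀ ∧
      ∀ w : X, f v ≤ f w + ((lam * ‖w - v‖ : ℝ) : EReal) := by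
  classical
  set le' : X → X → Prop := fun y x => f y + ((lam * ‖y - x‖ : ℝ) : EReal) ≤ f x with hle'
  have hrefl : ∀ x, le' x x := by
    intro x; simp only [hle', sub_self, norm_zero, mul_zero, EReal.coe_zero, add_zero, le_refl]
  have htrans : ∀ z y x, le' z y → le' y x → le' z x := by
    intro z y x h1 h2
    have tri : (lam * ‖z - x‖ : ℝ) ≤ lam * ‖z - y‖ + lam * ‖y - x‖ := by
      rw [← mul_add]
      have h3 : ‖z - x‖ ≤ ‖z - y‖ + ‖y - x‖ := by
        calc ‖z - x‖ = ‖z - y + (y - x)‖ := by rw [sub_add_sub_cancel]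
          _ ≤ ‖z - y‖ + ‖y - x‖ := norm_add_le _ _
      exact mul_le_mul_of_nonneg_left h3 hlam.le
    calc f z + ((lam * ‖z - x‖ : ℝ) : EReal)
        ≤ f z + ((lam * ‖z - y‖ + lam * ‖y - x‖ : ℝ) : EReal) := by
          exact add_le_add_right (EReal.coe_le_coe_iff.2 tri) _
      _ = (f z + ((lam * ‖z - y‖ : ℝ) : EReal)) + ((lam * ‖y - x‖ : ℝ) : EReal) := by
          rw [EReal.coe_add, add_assoc]
      _ ≤ f y + ((lam * ‖y - x‖ : ℝ) : EReal) := add_le_add_left h1 _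
      _ ≤ f x := h2
  -- values are bounded below by c, so never ⊥
  have hne_bot : ∀ x : X, f x ≠ ⊥ := fun x h => by
    have := hc x; rw [h] at this; exact (EReal.coe_ne_bot c) (le_bot_iff.1 this)
  -- the step lemma
  have step : ∀ (n : ℕ) (x : X), f x < ⊤ → ∃ y : X, le' y x ∧
      ∀ w, le' w x → f y ≤ f w + (((1/2 : ℝ)^n : ℝ) : EReal) := by
    intro n x hx
    set m : EReal := ⨅ w : {w : X // le' w x}, f w.1 with hm
    have hmle : m ≤ f x := iInf_le (fun w : {w : X // le' w x} => f w.1) ⟨x, hrefl x⟩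
    have hmtop : m ≠ ⊤ := ne_top_of_le_ne_top hx.ne hmle
    have hmbot : m ≠ ⊥ := by
      have : (c : EReal) ≤ m := le_iInf fun w => hc w.1
      exact fun h => (EReal.coe_ne_bot c) (le_bot_iff.1 (h ▸ this))
    have hmlt : m < m + (((1/2 : ℝ)^n : ℝ) : EReal) := by
      rw [← EReal.coe_toReal hmtop hmbot, ← EReal.coe_add, EReal.coe_lt_coe_iff]
      have : (0:ℝ) < (1/2:ℝ)^n := by positivity
      linarith
    obtain ⟨⟨y, hy⟩, hylt⟩ := iInf_lt_iff.1 (hm ▸ hmlt : (⨅ w : {w : X // le' w x}, f w.1) < m + _)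
    refine ⟨y, hy, fun w hw => ?_⟩
    have : m ≤ f w := iInf_le (fun w : {w : X // le' w x} => f w.1) ⟨w, hw⟩
    exact hylt.le.trans (add_le_add_left this _)
  -- construct the sequence
  have hstep_fin : ∀ {y x : X}, le' y x → f y ≤ f x := by
    intro y x h
    have h0 : (0 : EReal) ≤ ((lam * ‖y - x‖ : ℝ) : EReal) := by
      rw [← EReal.coe_zero, EReal.coe_le_coe_iff]; positivity
    calc f y = f y + 0 := (add_zero _).symm
      _ ≤ f y + ((lam * ‖y - x‖ : ℝ) : EReal) := add_le_add_right h0 _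
      _ ≤ f x := h
  let next : ℕ → {x : X // f x < ⊤} → {x : X // f x < ⊤} := fun n p =>
    ⟨(step n p.1 p.2).choose, lt_of_le_of_lt (hstep_fin (step n p.1 p.2).choose_spec.1) p.2⟩
  let xs : ℕ → {x : X // f x < ⊤} := fun n => Nat.rec ⟨x₀, h₀⟩ (fun n p => next n p) n
  set x : ℕ → X := fun n => (xs n).1 with hx
  have hxtop : ∀ n, f (x n) < ⊤ := fun n => (xs n).2
  have hx0 : x 0 = x₀ := rfl
  have hsucc : ∀ n, xs (n+1) = next n (xs n) := fun n => rfl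
  have hstep1 : ∀ n, le' (x (n+1)) (x n) := fun n => (step n (x n) (hxtop n)).choose_spec.1
  have hstep2 : ∀ n, ∀ w, le' w (x n) → f (x (n+1)) ≤ f w + (((1/2 : ℝ)^n : ℝ) : EReal) :=
    fun n => (step n (x n) (hxtop n)).choose_spec.2
  have hchain : ∀ n m, n ≤ m → le' (x m) (x n) := by
    intro n m h
    induction m, h using Nat.le_induction with
    | base => exact hrefl _
    | succ m hm ih => exact htrans _ _ _ (hstep1 m) ih
  -- key distance estimate
  have hkey : ∀ n, ∀ w, le' w (x (n+1)) → ‖w - x (n+1)‖ ≤ (1/2:ℝ)^n / lam := by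
    intro n w hw
    have hwS : le' w (x n) := htrans _ _ _ hw (hstep1 n)
    have h1 : f (x (n+1)) ≤ f w + (((1/2:ℝ)^n : ℝ) : EReal) := hstep2 n w hwS
    have h2 : f w + ((lam * ‖w - x (n+1)‖ : ℝ) : EReal) ≤ f w + (((1/2:ℝ)^n : ℝ) : EReal) :=
      hw.trans h1
    have hwtop : f w ≠ ⊤ := ((hstep_fin hw).trans_lt (hxtop (n+1))).ne
    set r := (f w).toReal with hr
    rw [← EReal.coe_toReal hwtop (hne_bot w), ← EReal.coe_add, ← EReal.coe_add,
      EReal.coe_le_coe_iff] at h2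
    rw [le_div_iff₀ hlam]
    linarith
  -- the shifted sequence is Cauchy
  have hdist : ∀ n m N : ℕ, N ≤ n → N ≤ m →
      dist (x (n+1)) (x (m+1)) ≤ 2 * ((1/2:ℝ)^N / lam) := by
    have base : ∀ N n : ℕ, N ≤ n → dist (x (n+1)) (x (N+1)) ≤ (1/2:ℝ)^N / lam := by
      intro N n hNn
      rw [dist_eq_norm]
      exact hkey N _ (hchain (N+1) (n+1) (by omega))
    intro n m N hn hm
    calc dist (x (n+1)) (x (m+1)) ≤ dist (x (n+1)) (x (N+1)) + dist (x (N+1)) (x (m+1)) :=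
        dist_triangle _ _ _
      _ ≤ (1/2:ℝ)^N / lam + (1/2:ℝ)^N / lam := by
        refine add_le_add (base N n hn) ?_
        rw [dist_comm]; exact base N m hm
      _ = 2 * ((1/2:ℝ)^N / lam) := by ring
  have hb0 : Tendsto (fun N : ℕ => 2 * ((1/2:ℝ)^N / lam)) atTop (nhds 0) := by
    have h1 : Tendsto (fun N : ℕ => (1/2:ℝ)^N) atTop (nhds 0) :=
      tendsto_pow_atTop_nhds_zero_of_lt_one (by norm_num) (by norm_num)
    have := (h1.div_const lam).const_mul 2
    simpa using this
  have hcauchy : CauchySeq (fun n => x (n+1)) :=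
    cauchySeq_of_le_tendsto_0 _ (fun n m N hn hm => hdist n m N hn hm) hb0
  obtain ⟨v, hv⟩ := cauchySeq_tendsto_of_complete hcauchy
  have hxv : Tendsto x atTop (nhds v) := (tendsto_add_atTop_iff_nat 1).1 hv
  -- real values
  set a : ℕ → ℝ := fun n => (f (x n)).toReal with ha
  have hcoe : ∀ n, ((a n : ℝ) : EReal) = f (x n) :=
    fun n => EReal.coe_toReal (hxtop n).ne (hne_bot _)
  have hareal : ∀ n m : ℕ, n ≤ m → a m + lam * ‖x m - x n‖ ≤ a n := by
    intro n m h
    have := hchain n m h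
    rw [hle'] at this
    rw [← hcoe n, ← hcoe m, ← EReal.coe_add, EReal.coe_le_coe_iff] at this
    exact this
  have hanti : Antitone a := by
    intro n m h
    have := hareal n m h
    nlinarith [norm_nonneg (x m - x n)]
  have habdd : BddBelow (Set.range a) := by
    refine ⟨c, ?_⟩
    rintro _ ⟨n, rfl⟩
    have := hc (x n)
    rw [← hcoe n, EReal.coe_le_coe_iff] at this
    exact this
  set L : ℝ := ⨅ n, a n with hL
  have haL : Tendsto a atTop (nhds L) := tendsto_atTop_ciInf hanti habdd
  have haLle : ∀ n, L ≤ a n := fun n => ciInf_le habdd n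
  -- f v ≤ L
  have hfvL : f v ≤ (L : EReal) := by
    by_contra hcon
    push_neg at hcon
    obtain ⟨b, hLb, hbv⟩ := EReal.exists_between_coe_real hcon
    have hev : ∀ᶠ n in atTop, (b : EReal) < f (x n) := hxv.eventually (hf v _ hbv)
    have hev2 : ∀ᶠ n in atTop, b < a n := by
      filter_upwards [hev] with n hn
      rw [← hcoe n, EReal.coe_lt_coe_iff] at hn; exact hn
    have : b ≤ L := ge_of_tendsto haL (hev2.mono fun n hn => hn.le)
    exact absurd (EReal.coe_lt_coe_iff.1 hLb) (not_lt.2 this)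
  -- v is below every x n
  have hlim : ∀ n, le' v (x n) := by
    intro n
    have hreal : L + lam * ‖v - x n‖ ≤ a n := by
      have htend : Tendsto (fun m => a m + lam * ‖x m - x n‖) atTop
          (nhds (L + lam * ‖v - x n‖)) := by
        refine haL.add (Tendsto.const_mul _ ?_)
        exact ((hxv.sub_const (x n)).norm)
      refine le_of_tendsto htend ?_
      filter_upwards [eventually_ge_atTop n] with m hm using hareal n m hm
    calc f v + ((lam * ‖v - x n‖ : ℝ) : EReal)
        ≤ (L : EReal) + ((lam * ‖v - x n‖ : ℝ) : EReal) := add_le_add_left hfvL _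
      _ = ((L + lam * ‖v - x n‖ : ℝ) : EReal) := by rw [EReal.coe_add]
      _ ≤ ((a n : ℝ) : EReal) := EReal.coe_le_coe_iff.2 hreal
      _ = f (x n) := hcoe n
  refine ⟨v, ?_, ?_⟩
  · have := hlim 0
    rwa [hx0] at this
  · intro w
    by_contra hcon
    push_neg at hcon
    have hwv : le' w v := hcon.le
    have hwn : ∀ n, le' w (x n) := fun n => htrans _ _ _ hwv (hlim n)
    have hwd : ∀ n : ℕ, dist (x (n+1)) w ≤ (1/2:ℝ)^n / lam := by
      intro n
      rw [dist_comm, dist_eq_norm]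
      exact hkey n w (hwn (n+1))
    have hxw : Tendsto (fun n => x (n+1)) atTop (nhds w) := by
      rw [tendsto_iff_dist_tendsto_zero]
      refine squeeze_zero (fun n => dist_nonneg) hwd ?_
      have h1 : Tendsto (fun N : ℕ => (1/2:ℝ)^N) atTop (nhds 0) :=
        tendsto_pow_atTop_nhds_zero_of_lt_one (by norm_num) (by norm_num)
      simpa using h1.div_const lam
    have hwveq : w = v := tendsto_nhds_unique hxw hv
    rw [hwveq, sub_self, norm_zero, mul_zero, EReal.coe_zero, add_zero] at hcon
    exact lt_irrefl _ hcon

theorem symmetric_strong_ekeland_IV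
    {X : Type*} [NormedAddCommGroup X] [NormedSpace ℝ X] [CompleteSpace X]
    {V : Type*} [NormedAddCommGroup V] [NormedSpace ℝ V] [CompleteSpace V]
    {W : Type*} [NormedAddCommGroup W] [NormedSpace ℝ W] [CompleteSpace W]
    (ι : X →L[ℝ] V) (κ : V →L[ℝ] W)
    (K : ℝ) (hK : 0 < K) (hιK : ∀ u : X, ‖ι u‖ ≤ K * ‖u‖)
    (S : Set X)
    {P : Type*} [TopologicalSpace P] [PathConnectedSpace P]
    (pol : X → P → X) (sy : X → X)
    (hpolS : ∀ u ∈ S, ∀ H : P, pol u H ∈ S)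
    (hsyS : ∀ u : X, sy u ∈ S)
    (hpolCont : ContinuousOn (fun q : X × P => pol q.1 q.2) (S ×ˢ Set.univ))
    (hsypol : ∀ u ∈ S, ∀ H : P,
      pol (sy u) H = sy u ∧ sy (pol u H) = sy u ∧ pol (pol u H) H = pol u H)
    (happrox : ∃ Hs : ℕ → P, ∀ u ∈ S,
      Filter.Tendsto (fun m => ι (List.foldl pol u ((List.range m).map Hs)))
        Filter.atTop (nhds (ι (sy u))))
    (hpolContr : ∀ u ∈ S, ∀ v ∈ S, ∀ H : P, ‖ι (pol u H) - ι (pol v H)‖ ≤ ‖ι u - ι v‖)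
    (Θ : X → X) (CΘ : ℝ) (hCΘ : 0 < CΘ)
    (hΘS : ∀ u : X, Θ u ∈ S) (hΘid : ∀ u ∈ S, Θ u = u)
    (hΘlip : ∀ u v : X, ‖ι (Θ u) - ι (Θ v)‖ ≤ CΘ * ‖ι u - ι v‖)
    (hpolext : ∀ u : X, ∀ H : P, pol u H = pol (Θ u) H)
    (hsyext : ∀ u : X, sy u = sy (Θ u))
    (T : ℝ → X → X)
    (hTS : ∀ ρ > (0:ℝ), ∀ u ∈ S, T ρ u ∈ S)
    (hTpol : ∀ ρ > (0:ℝ), ∀ u ∈ S, ∃ l : List P, T ρ u = List.foldl pol u l)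
    (hTsy : ∀ ρ > (0:ℝ), ∀ u ∈ S, sy (T ρ u) = sy u)
    (hTapprox : ∀ ρ > (0:ℝ), ∀ u ∈ S, ‖ι (T ρ u) - ι (sy u)‖ < ρ)
    (f : X → EReal)
    (hfproper : ∃ u, f u ≠ ⊤)
    (hfbdd : ∃ c : ℝ, ∀ u, (c : EReal) ≤ f u)
    (hflsc : LowerSemicontinuous f)
    (hfpol : ∀ u ∈ S, ∀ H : P, f (pol u H) ≤ f u)
    (ρ₁ ρ₂ σ : ℝ) (hρ₁ : 0 < ρ₁) (hρ₂ : 0 < ρ₂) (hσ : 0 < σ)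
    (u : X) (hu : u ∈ S)
    (hfu : f u < (⨅ w, f w) + ((σ * ρ₁ : ℝ) : EReal)) :
    ∃ v : X,
      ‖ι v - ι (sy v)‖ < (K * (CΘ + 1) + 1) * (ρ₁ + ρ₂) ∧
      (∀ w : X, f v - ((σ * ‖w - v‖ : ℝ) : EReal) ≤ f w) ∧
      (∀ us : ℕ → X,
        Filter.Tendsto (fun h => f (us h) + ((σ * ‖us h - v‖ : ℝ) : EReal))
          Filter.atTop (nhds (f v)) →
        Filter.Tendsto us Filter.atTop (nhds v)) := by

  classical
  obtain ⟨c, hc⟩ := hfbdd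
  -- fold lemmas
  have hfoldS : ∀ l : List P, ∀ a ∈ S, List.foldl pol a l ∈ S ∧ f (List.foldl pol a l) ≤ f a := by
    intro l
    induction l with
    | nil => intro a ha; simp only [List.foldl_nil]; exact ⟨ha, le_refl _⟩
    | cons H t ih =>
      intro a ha
      simp only [List.foldl_cons]
      have h1 : pol a H ∈ S := hpolS a ha H
      exact ⟨(ih _ h1).1, (ih _ h1).2.trans (hfpol a ha H)⟩
  -- symmetrization is a contraction on S (through ι)
  have hsyContr : ∀ a ∈ S, ∀ b ∈ S, ‖ι (sy a) - ι (sy b)‖ ≤ ‖ι a - ι b‖ := by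
    obtain ⟨Hs, hHs⟩ := happrox
    intro a ha b hb
    have key : ∀ m : ℕ,
        ‖ι (List.foldl pol a ((List.range m).map Hs)) -
          ι (List.foldl pol b ((List.range m).map Hs))‖ ≤ ‖ι a - ι b‖ := by
      intro m
      induction m with
      | zero => simp
      | succ m ih =>
        have hra : List.range (m+1) = List.range m ++ [m] := by rw [List.range_succ]
        rw [hra, List.map_append, List.foldl_append, List.foldl_append]
        simp only [List.map_cons, List.map_nil, List.foldl_cons, List.foldl_nil]
        have hma : List.foldl pol a ((List.range m).map Hs) ∈ S := (hfoldS _ a ha).1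
        have hmb : List.foldl pol b ((List.range m).map Hs) ∈ S := (hfoldS _ b hb).1
        exact (hpolContr _ hma _ hmb (Hs m)).trans ih
    have htend : Tendsto (fun m =>
        ‖ι (List.foldl pol a ((List.range m).map Hs)) -
          ι (List.foldl pol b ((List.range m).map Hs))‖) atTop
        (nhds ‖ι (sy a) - ι (sy b)‖) := ((hHs a ha).sub (hHs b hb)).norm
    exact le_of_tendsto htend (Filter.Eventually.of_forall key)
  -- basic finiteness
  have hfu_top : f u < ⊤ := lt_of_lt_of_le hfu le_top
  set ρ' : ℝ := ρ₁ + ρ₂ with hρ'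
  have hρ'pos : 0 < ρ' := by positivity
  set u₁ : X := T ρ' u with hu₁
  have hu₁S : u₁ ∈ S := hTS ρ' hρ'pos u hu
  have hfu₁ : f u₁ ≤ f u := by
    obtain ⟨l, hl⟩ := hTpol ρ' hρ'pos u hu
    rw [hu₁, hl]
    exact (hfoldS l u hu).2
  have hfu₁top : f u₁ < ⊤ := lt_of_le_of_lt hfu₁ hfu_top
  -- Ekeland with slope lam
  set lam : ℝ := σ * ρ₁ / (ρ₁ + ρ₂) with hlamdef
  have hlam : 0 < lam := by positivity
  have hlamσ : lam < σ := by
    rw [hlamdef, div_lt_iff₀ (by positivity)]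
    nlinarith
  obtain ⟨v, hv1, hv2⟩ := ekeland_weak' f c hc hflsc lam hlam u₁ hfu₁top
  -- f v is finite
  have hfvtop : f v ≠ ⊤ := by
    refine ((?_ : f v ≤ f u₁).trans_lt hfu₁top).ne
    have h0 : (0 : EReal) ≤ ((lam * ‖v - u₁‖ : ℝ) : EReal) := by
      rw [← EReal.coe_zero, EReal.coe_le_coe_iff]; positivity
    calc f v = f v + 0 := (add_zero _).symm
      _ ≤ f v + ((lam * ‖v - u₁‖ : ℝ) : EReal) := add_le_add_right h0 _
      _ ≤ f u₁ := hv1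
  have hfvbot : f v ≠ ⊥ := fun h => (EReal.coe_ne_bot c) (le_bot_iff.1 (h ▸ hc v))
  set Fv : ℝ := (f v).toReal with hFv
  have hFvcoe : ((Fv : ℝ) : EReal) = f v := EReal.coe_toReal hfvtop hfvbot
  -- distance bound
  have hdistvu₁ : ‖v - u₁‖ < ρ₁ + ρ₂ := by
    have hIlev : (⨅ w, f w) ≤ f v := iInf_le _ v
    have hchain : f v + ((lam * ‖v - u₁‖ : ℝ) : EReal) < f v + ((σ * ρ₁ : ℝ) : EReal) := by
      calc f v + ((lam * ‖v - u₁‖ : ℝ) : EReal) ≤ f u₁ := hv1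
        _ ≤ f u := hfu₁
        _ < (⨅ w, f w) + ((σ * ρ₁ : ℝ) : EReal) := hfu
        _ ≤ f v + ((σ * ρ₁ : ℝ) : EReal) := add_le_add_left hIlev _
    rw [← hFvcoe, ← EReal.coe_add, ← EReal.coe_add, EReal.coe_lt_coe_iff] at hchain
    have hmul : lam * ‖v - u₁‖ < σ * ρ₁ := by linarith
    have heq : σ * ρ₁ = lam * (ρ₁ + ρ₂) := by
      rw [hlamdef]; field_simp
    rw [heq] at hmul
    exact lt_of_mul_lt_mul_left (by linarith [hmul]) hlam.le
  refine ⟨v, ?_, ?_, ?_⟩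
  · -- (a) closeness to symmetrization
    have h1 : ‖ι v - ι u₁‖ ≤ K * ‖v - u₁‖ := by
      have := hιK (v - u₁)
      rwa [map_sub] at this
    have h2 : ‖ι u₁ - ι (sy u₁)‖ < ρ' := by
      have := hTapprox ρ' hρ'pos u hu
      rw [hTsy ρ' hρ'pos u hu]
      exact this
    have h3 : ‖ι (sy v) - ι (sy u₁)‖ ≤ CΘ * (K * ‖v - u₁‖) := by
      have hΘv : Θ v ∈ S := hΘS v
      have hΘu₁ : Θ u₁ = u₁ := hΘid u₁ hu₁S
      calc ‖ι (sy v) - ι (sy u₁)‖ = ‖ι (sy (Θ v)) - ι (sy (Θ u₁))‖ := by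
            rw [← hsyext v, hΘu₁]
        _ ≤ ‖ι (Θ v) - ι (Θ u₁)‖ := hsyContr _ hΘv _ (by rw [hΘu₁]; exact hu₁S)
        _ ≤ CΘ * ‖ι v - ι u₁‖ := hΘlip v u₁
        _ ≤ CΘ * (K * ‖v - u₁‖) := mul_le_mul_of_nonneg_left h1 hCΘ.le
    have htri : ‖ι v - ι (sy v)‖ ≤ ‖ι v - ι u₁‖ + ‖ι u₁ - ι (sy u₁)‖ + ‖ι (sy v) - ι (sy u₁)‖ := by
      calc ‖ι v - ι (sy v)‖ = ‖(ι v - ι u₁) + (ι u₁ - ι (sy u₁)) + (ι (sy u₁) - ι (sy v))‖ := by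
            congr 1; abel
        _ ≤ ‖(ι v - ι u₁) + (ι u₁ - ι (sy u₁))‖ + ‖ι (sy u₁) - ι (sy v)‖ := norm_add_le _ _
        _ ≤ ‖ι v - ι u₁‖ + ‖ι u₁ - ι (sy u₁)‖ + ‖ι (sy u₁) - ι (sy v)‖ := by
            gcongr; exact norm_add_le _ _
        _ = ‖ι v - ι u₁‖ + ‖ι u₁ - ι (sy u₁)‖ + ‖ι (sy v) - ι (sy u₁)‖ := by
            rw [norm_sub_rev (ι (sy u₁)) (ι (sy v))]
    have hvu : ‖v - u₁‖ < ρ' := hdistvu₁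
    have hb1 : K * ‖v - u₁‖ ≤ K * ρ' := mul_le_mul_of_nonneg_left hvu.le hK.le
    have hb3 : CΘ * (K * ‖v - u₁‖) ≤ CΘ * (K * ρ') :=
      mul_le_mul_of_nonneg_left hb1 hCΘ.le
    have hexp : (K * (CΘ + 1) + 1) * ρ' = K * ρ' + CΘ * (K * ρ') + ρ' := by ring
    have hfin : ‖ι v - ι (sy v)‖ < (K * (CΘ + 1) + 1) * ρ' := by
      rw [hexp]; linarith
    rw [hρ'] at hfin
    exact hfin
  · -- (b) the variational inequality
    intro w
    have hle : f v ≤ f w + ((σ * ‖w - v‖ : ℝ) : EReal) := by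
      refine (hv2 w).trans (add_le_add_right ?_ _)
      rw [EReal.coe_le_coe_iff]
      exact mul_le_mul_of_nonneg_right hlamσ.le (norm_nonneg _)
    exact (EReal.sub_le_iff_le_add (Or.inl (EReal.coe_ne_bot _))
      (Or.inl (EReal.coe_ne_top _))).2 hle
  · -- (c) well-posedness
    intro us hus
    rw [Metric.tendsto_atTop]
    intro η hη
    set δ : ℝ := (σ - lam) * η with hδ
    have hδpos : 0 < δ := by
      have := hlamσ; nlinarith
    have hfvlt : f v < f v + (δ : EReal) := by
      rw [← hFvcoe, ← EReal.coe_add, EReal.coe_lt_coe_iff]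
      linarith
    have hev : ∀ᶠ n in atTop, f (us n) + ((σ * ‖us n - v‖ : ℝ) : EReal) < f v + (δ : EReal) :=
      hus.eventually_lt_const hfvlt
    rw [Filter.eventually_atTop] at hev
    obtain ⟨N, hN⟩ := hev
    refine ⟨N, fun n hn => ?_⟩
    have hlt := hN n hn
    by_contra hcon
    push_neg at hcon
    have hηle : η ≤ ‖us n - v‖ := by
      rw [dist_eq_norm] at hcon
      exact hcon
    have hge : f v + (δ : EReal) ≤ f (us n) + ((σ * ‖us n - v‖ : ℝ) : EReal) := by
      have hsplit : (σ * ‖us n - v‖ : ℝ) = lam * ‖us n - v‖ + (σ - lam) * ‖us n - v‖ := by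
        ring
      have h1 : ((δ : ℝ) : EReal) ≤ (((σ - lam) * ‖us n - v‖ : ℝ) : EReal) := by
        rw [EReal.coe_le_coe_iff, hδ]
        nlinarith [hlamσ]
      have h2 := add_le_add (hv2 (us n)) h1
      rw [hsplit, EReal.coe_add, ← add_assoc]
      exact h2
    exact absurd hlt (not_lt.2 hge)
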